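/- Every subgroup H of a finite abelian group G is a perfect code of some Cayley sum graph of G. -/

import Mathlib

def caySumAdd (G : Type*) [AddGroup G] (X : Set G) : SimpleGraph G :=
  SimpleGraph.fromRel (fun g h => g + h ∈ X)

def IsPerfectCode {V : Type*} (Γ : SimpleGraph V) (C : Set V) : Prop :=
  (∀ u ∈ C, ∀ v ∈ C, ¬ Γ.Adj u v) ∧ ∀ v ∉ C, ∃! u, u ∈ C ∧ Γ.Adj v u

def IsTotalPerfectCode {V : Type*} (Γ : SimpleGraph V) (C : Set V) : Prop :=
  ∀ v, ∃! u, u ∈ C ∧ Γ.Adj v u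

/-- The Frattini subgroup of an additive subgroup `Q`: the intersection of `Q` with all
maximal proper subgroups of `Q`. -/
def addFrattini {G : Type*} [AddGroup G] (Q : AddSubgroup G) : AddSubgroup G :=
  Q ⊓ sInf {M : AddSubgroup G | M < Q ∧ ∀ N : AddSubgroup G, M < N → N ≤ Q → N = Q}

theorem abelian_subgroup_perfectCode {G : Type*} [AddCommGroup G] [Finite G]
    (H : AddSubgroup G) :
    ∃ X : Set G, IsPerfectCode (caySumAdd G X) (H : Set G) := by
  classical
  refine ⟨{g : G | (QuotientAddGroup.mk g : G ⧸ H) ≠ 0 ∧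
      (QuotientAddGroup.mk g : G ⧸ H).out = g}, ?_, ?_⟩
  · intro u hu v hv hadj
    obtain ⟨hne, h⟩ := hadj
    have huv : (QuotientAddGroup.mk (u + v) : G ⧸ H) = 0 :=
      (QuotientAddGroup.eq_zero_iff _).2 (H.add_mem hu hv)
    rcases h with h | h
    · exact h.1 huv
    · rw [add_comm] at huv; exact h.1 huv
  · intro v hv
    have hmkv : (QuotientAddGroup.mk v : G ⧸ H) ≠ 0 := by
      simpa [QuotientAddGroup.eq_zero_iff] using hv
    set w := (QuotientAddGroup.mk v : G ⧸ H).out with hw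
    have hmkw : (QuotientAddGroup.mk w : G ⧸ H) = QuotientAddGroup.mk v :=
      QuotientAddGroup.out_eq' _
    refine ⟨w - v, ⟨?_, ?_⟩, ?_⟩
    · have : (QuotientAddGroup.mk (w - v) : G ⧸ H) = 0 := by
        rw [QuotientAddGroup.mk_sub, hmkw, sub_self]
      exact (QuotientAddGroup.eq_zero_iff _).1 this
    · constructor
      · intro h
        apply hv
        rw [h]
        have : (QuotientAddGroup.mk (w - v) : G ⧸ H) = 0 := by
          rw [QuotientAddGroup.mk_sub, hmkw, sub_self]
        exact (QuotientAddGroup.eq_zero_iff _).1 this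
      · left
        show v + (w - v) ∈ _
        rw [show v + (w - v) = w by abel]
        exact ⟨by rw [hmkw]; exact hmkv, by rw [hmkw]⟩
    · rintro u' ⟨hu', hne, h⟩
      have hx : v + u' ∈ {g : G | (QuotientAddGroup.mk g : G ⧸ H) ≠ 0 ∧
          (QuotientAddGroup.mk g : G ⧸ H).out = g} := by
        rcases h with h | h
        · exact h
        · rwa [add_comm]
      have hmk : (QuotientAddGroup.mk (v + u') : G ⧸ H) = QuotientAddGroup.mk v := by
        rw [QuotientAddGroup.mk_add, (QuotientAddGroup.eq_zero_iff _).2 hu', add_zero]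
      have : v + u' = w := by rw [← hx.2, hmk]
      exact eq_sub_of_add_eq' this
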